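/- Let a > 0 and define φ₀ : ℝ² → ℝ by φ₀(x) = -2 log(1 + π a |x|²). For every R > 0, ∫_{B_R(0)} |∇φ₀(x)|² dx = 16π ( log(1 + π a R²) + 1/(1 + π a R²) - 1 ). -/

import Mathlib

open Real MeasureTheory

lemma aux_radial_integral (c : ℝ) (hc : 0 < c) (R : ℝ) (hR : 0 < R)
    (f : ℝ → ℝ) (hf : ∀ r, f r = 16 * c ^ 2 * r ^ 2 / (1 + c * r ^ 2) ^ 2) :
    ∫ x in Metric.ball (0 : EuclideanSpace ℝ (Fin 2)) R, f ‖x‖ =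
      16 * Real.pi * (Real.log (1 + c * R ^ 2) + 1 / (1 + c * R ^ 2) - 1) := by
  set g : ℝ → ℝ := Set.indicator (Set.Iio R) f with hg
  have h0 : ∫ x in Metric.ball (0 : EuclideanSpace ℝ (Fin 2)) R, f ‖x‖ =
      ∫ x : EuclideanSpace ℝ (Fin 2), g ‖x‖ := by
    rw [← integral_indicator measurableSet_ball]
    congr 1
    funext x
    by_cases h : ‖x‖ < R
    · rw [Set.indicator_of_mem (by simpa [Metric.mem_ball] using h),
        hg, Set.indicator_of_mem (by simpa using h)]
    · rw [Set.indicator_of_notMem (by simpa [Metric.mem_ball] using h),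
        hg, Set.indicator_of_notMem (by simpa using h)]
  rw [h0, integral_fun_norm_addHaar (volume : Measure (EuclideanSpace ℝ (Fin 2))) g]
  have hdim : Module.finrank ℝ (EuclideanSpace ℝ (Fin 2)) = 2 := finrank_euclideanSpace_fin
  rw [hdim]
  have hball : (volume (Metric.ball (0 : EuclideanSpace ℝ (Fin 2)) 1)).toReal = Real.pi := by
    rw [EuclideanSpace.volume_ball]
    simp only [Fintype.card_fin]
    rw [show ((2:ℕ):ℝ) / 2 + 1 = 2 by norm_num,
      show Real.Gamma 2 = 1 by
        rw [show (2:ℝ) = (1:ℕ) + 1 by norm_num, Real.Gamma_nat_eq_factorial]; norm_num]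
    rw [ENNReal.toReal_mul, ENNReal.toReal_pow, ENNReal.toReal_ofReal one_pos.le, one_pow,
      one_mul, ENNReal.toReal_ofReal (by positivity), div_one, sq_sqrt Real.pi_pos.le]
  rw [measureReal_def, hball]
  have h1 : ∫ y in Set.Ioi (0:ℝ), y ^ (2 - 1) • g y =
      ∫ y in (0:ℝ)..R, y * f y := by
    have hy : ∀ y : ℝ, y ^ (2 - 1) • g y = Set.indicator (Set.Iio R) (fun y => y * f y) y := by
      intro y
      by_cases h : y < R
      · simp [hg, Set.indicator_of_mem, h]
      · simp [hg, Set.indicator_of_notMem, h]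
    simp_rw [hy]
    rw [integral_indicator measurableSet_Iio, Measure.restrict_restrict measurableSet_Iio,
      Set.Iio_inter_Ioi, intervalIntegral.integral_of_le hR.le,
      ← integral_Ioc_eq_integral_Ioo]
  rw [h1]
  have hden : ∀ t : ℝ, (0:ℝ) < 1 + c * t ^ 2 := fun t => by positivity
  have hftc : ∫ y in (0:ℝ)..R, y * f y =
      (8 * Real.log (1 + c * R ^ 2) + 8 * (1 + c * R ^ 2)⁻¹) -
      (8 * Real.log (1 + c * 0 ^ 2) + 8 * (1 + c * 0 ^ 2)⁻¹) := by
    apply intervalIntegral.integral_eq_sub_of_hasDerivAt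
      (f := fun r : ℝ => 8 * Real.log (1 + c * r ^ 2) + 8 * (1 + c * r ^ 2)⁻¹)
    · intro t ht
      have hu : HasDerivAt (fun r : ℝ => 1 + c * r ^ 2) (c * (2 * t)) t := by
        simpa using ((hasDerivAt_pow 2 t).const_mul c).const_add 1
      have hd := ((hu.log (hden t).ne').const_mul 8).add ((hu.inv (hden t).ne').const_mul 8)
      convert hd using 1
      · rfl
      rw [hf]
      have h := (hden t).ne'
      field_simp
      ring
    · apply Continuous.intervalIntegrable
      refine continuous_id.mul ?_
      rw [show f = fun r => 16 * c ^ 2 * r ^ 2 / (1 + c * r ^ 2) ^ 2 from funext hf]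
      exact ((by continuity : Continuous fun y : ℝ => 16 * c ^ 2 * y ^ 2).div
        (by continuity) (fun y => (by positivity : (0:ℝ) < (1 + c * y ^ 2) ^ 2).ne'))
  rw [hftc]
  have hU := (hden R).ne'
  rw [show (1:ℝ) + c * 0 ^ 2 = 1 by ring]
  simp only [Real.log_one, inv_one, nsmul_eq_mul, smul_eq_mul]
  field_simp
  ring

theorem stmt_3 (a : ℝ) (ha : 0 < a)
    (φ₀ : EuclideanSpace ℝ (Fin 2) → ℝ)
    (hφ₀ : ∀ x, φ₀ x = -2 * Real.log (1 + Real.pi * a * ‖x‖ ^ 2))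
    (R : ℝ) (hR : 0 < R) :
    ∫ x in Metric.ball (0 : EuclideanSpace ℝ (Fin 2)) R, ‖gradient φ₀ x‖ ^ 2 =
      16 * Real.pi * (Real.log (1 + Real.pi * a * R ^ 2)
        + 1 / (1 + Real.pi * a * R ^ 2) - 1) := by
  set c := Real.pi * a with hc
  have hcpos : 0 < c := mul_pos Real.pi_pos ha
  have hgrad : ∀ x : EuclideanSpace ℝ (Fin 2),
      gradient φ₀ x = (-4 * c / (1 + c * ‖x‖ ^ 2)) • x := by
    intro x
    have hden : 0 < 1 + c * ‖x‖ ^ 2 := by positivity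
    have h1 : HasFDerivAt (fun y : EuclideanSpace ℝ (Fin 2) => ‖y‖ ^ 2)
        (2 • (innerSL ℝ x)) x := (hasStrictFDerivAt_norm_sq x).hasFDerivAt
    have hu : HasDerivAt (fun t : ℝ => 1 + c * t) c (‖x‖ ^ 2) := by
      simpa using ((hasDerivAt_id (‖x‖ ^ 2)).const_mul c).const_add 1
    have h2 : HasDerivAt (fun t : ℝ => -2 * Real.log (1 + c * t))
        (-2 * (c / (1 + c * ‖x‖ ^ 2))) (‖x‖ ^ 2) := (hu.log hden.ne').const_mul (-2)
    have h3 := h2.comp_hasFDerivAt x h1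
    have hfun : φ₀ = (fun t : ℝ => -2 * Real.log (1 + c * t)) ∘
        (fun y : EuclideanSpace ℝ (Fin 2) => ‖y‖ ^ 2) := by
      funext y; simp [hφ₀, Function.comp]
    have h4 : HasGradientAt φ₀ ((-4 * c / (1 + c * ‖x‖ ^ 2)) • x) x := by
      rw [hasGradientAt_iff_hasFDerivAt, hfun]
      convert h3 using 1
      · rfl
      refine ContinuousLinearMap.ext fun (y : EuclideanSpace ℝ (Fin 2)) => ?_
      simp only [InnerProductSpace.toDual_apply_apply, ContinuousLinearMap.smul_apply, innerSL_apply_apply,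
        real_inner_smul_left, smul_eq_mul]
      ring
    exact h4.gradient
  have hpt : ∀ x : EuclideanSpace ℝ (Fin 2),
      ‖gradient φ₀ x‖ ^ 2 = 16 * c ^ 2 * ‖x‖ ^ 2 / (1 + c * ‖x‖ ^ 2) ^ 2 := by
    intro x
    have hden : 0 < 1 + c * ‖x‖ ^ 2 := by positivity
    rw [hgrad x, norm_smul, Real.norm_eq_abs, mul_pow, sq_abs, div_pow,
      div_mul_eq_mul_div]
    congr 1
    ring
  simp_rw [hpt]
  exact aux_radial_integral c hcpos R hR
    (fun r => 16 * c ^ 2 * r ^ 2 / (1 + c * r ^ 2) ^ 2) (fun r => rfl)
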